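/- Let p be an odd prime, n ≥ 0, ζ_{p^(d+1)} compatible primitive p^(d+1)-th roots of unity in ℚ_p-bar (ζ_{p^(d+1)}^p = ζ_{p^d}), π_n = ζ_{p^(n+1)} - 1. Then 1/π_n = (1/p^(n+1)) Σ_{a=1, p∤a}^{p^(n+1)} a·ζ_{p^(n+1)}^a + (1/p^n) Σ_{k=1}^{p^n - 1} k·ζ_{p^n}^k, where by convention the second sum is 1/π_{n-1} for n ≥ 1. -/

import Mathlib

open Finset

lemma key_sum {K : Type*} [Field K] (m : ℕ) (ζ : K) (hζ : IsPrimitiveRoot ζ m)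
    (hm : 2 ≤ m) : (ζ - 1) * ∑ k ∈ range m, (k : K) * ζ ^ k = m := by
  have h0 : ∑ k ∈ range m, ζ ^ k = 0 := hζ.geom_sum_eq_zero (by omega)
  have hpow : ζ ^ m = 1 := hζ.pow_eq_one
  have htel := Finset.sum_range_sub (fun k => (k : K) * ζ ^ k) m
  have hsplit : ∀ k ∈ range m,
      ((k + 1 : ℕ) : K) * ζ ^ (k + 1) - (k : K) * ζ ^ k
        = (ζ - 1) * ((k : K) * ζ ^ k) + ζ * ζ ^ k := by
    intro k _
    push_cast
    ring
  rw [Finset.sum_congr rfl hsplit, Finset.sum_add_distrib, ← Finset.mul_sum,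
    ← Finset.mul_sum, h0, mul_zero, add_zero, hpow] at htel
  rw [htel]
  push_cast
  ring

theorem stmt_17 {K : Type*} [Field K] [CharZero K] (p n : ℕ) (hp : p.Prime) (hodd : Odd p)
    (ζ : K) (hζ : IsPrimitiveRoot ζ (p ^ (n + 1))) :
    (ζ - 1)⁻¹ =
      (p ^ (n + 1) : K)⁻¹ *
          ∑ a ∈ (Finset.Icc 1 (p ^ (n + 1))).filter (fun a => ¬ p ∣ a), (a : K) * ζ ^ a
        + (p ^ n : K)⁻¹ * ∑ k ∈ Finset.Icc 1 (p ^ n - 1), (k : K) * (ζ ^ p) ^ k := by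
  have hp2 : 2 ≤ p := hp.two_le
  set m := p ^ (n + 1) with hm
  have hm2 : 2 ≤ m := by
    calc 2 ≤ p := hp2
    _ ≤ p ^ (n + 1) := Nat.le_self_pow (by omega) p
  have hpn1 : 1 ≤ p ^ n := Nat.one_le_pow _ _ (by omega)
  -- the filtered Icc sum equals the filtered range sum
  have hset : (Finset.Icc 1 m).filter (fun a => ¬ p ∣ a)
      = (Finset.range m).filter (fun a => ¬ p ∣ a) := by
    ext a
    simp only [mem_filter, mem_Icc, mem_range]
    constructor
    · rintro ⟨⟨h1, h2⟩, h3⟩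
      refine ⟨lt_of_le_of_ne h2 ?_, h3⟩
      rintro rfl
      exact h3 (dvd_pow_self p (Nat.succ_ne_zero n))
    · rintro ⟨h1, h3⟩
      refine ⟨⟨?_, le_of_lt h1⟩, h3⟩
      rcases Nat.eq_zero_or_pos a with rfl | h
      · exact absurd (dvd_zero p) h3
      · exact h
  -- the Icc sum for the second term equals a range sum
  have hset2 : ∑ k ∈ Finset.Icc 1 (p ^ n - 1), (k : K) * (ζ ^ p) ^ k
      = ∑ k ∈ range (p ^ n), (k : K) * (ζ ^ p) ^ k := by
    have : range (p ^ n) = insert 0 (Finset.Icc 1 (p ^ n - 1)) := by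
      ext a
      simp only [mem_range, mem_insert, mem_Icc]
      omega
    rw [this, Finset.sum_insert (by simp)]
    simp
  -- the multiples-of-p part of the range sum
  have himg : (Finset.range m).filter (fun a => p ∣ a)
      = (Finset.range (p ^ n)).image (fun b => p * b) := by
    ext a
    simp only [mem_filter, mem_range, mem_image]
    constructor
    · rintro ⟨h1, b, rfl⟩
      exact ⟨b, by
        constructor
        · rw [hm, pow_succ'] at h1
          exact lt_of_mul_lt_mul_left h1 (Nat.zero_le p)
        · rfl⟩
    · rintro ⟨b, hb, rfl⟩
      refine ⟨?_, ⟨b, rfl⟩⟩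
      rw [hm, pow_succ']
      exact (mul_lt_mul_iff_right₀ (by omega : 0 < p)).mpr hb
  have hmul : ∑ a ∈ (Finset.range m).filter (fun a => p ∣ a), (a : K) * ζ ^ a
      = (p : K) * ∑ k ∈ range (p ^ n), (k : K) * (ζ ^ p) ^ k := by
    rw [himg, Finset.sum_image (fun x _ y _ h => by
      exact Nat.eq_of_mul_eq_mul_left (by omega) h)]
    rw [Finset.mul_sum]
    refine Finset.sum_congr rfl fun b _ => ?_
    push_cast
    rw [← pow_mul]
    ring
  -- split the full range sum
  have hsplitsum : ∑ a ∈ range m, (a : K) * ζ ^ a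
      = ∑ a ∈ (Finset.range m).filter (fun a => ¬ p ∣ a), (a : K) * ζ ^ a
        + (p : K) * ∑ k ∈ range (p ^ n), (k : K) * (ζ ^ p) ^ k := by
    rw [← hmul, add_comm]
    exact (Finset.sum_filter_add_sum_filter_not _ _ _).symm
  have hkey := key_sum m ζ hζ hm2
  have hz1 : ζ - 1 ≠ 0 := sub_ne_zero.mpr (hζ.ne_one (by omega))
  have hmK : (m : K) ≠ 0 := Nat.cast_ne_zero.mpr (by positivity)
  have hpK : (p : K) ≠ 0 := Nat.cast_ne_zero.mpr (by omega)
  have hpnK : ((p : K)) ^ n ≠ 0 := pow_ne_zero _ hpK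
  have hmcast : (m : K) = (p : K) ^ (n + 1) := by push_cast [hm]; ring
  rw [hset, hset2]
  have hS : ∑ a ∈ (Finset.range m).filter (fun a => ¬ p ∣ a), (a : K) * ζ ^ a
      = ∑ a ∈ range m, (a : K) * ζ ^ a
        - (p : K) * ∑ k ∈ range (p ^ n), (k : K) * (ζ ^ p) ^ k := by
    rw [hsplitsum]; ring
  rw [hS]
  have hSval : ∑ a ∈ range m, (a : K) * ζ ^ a = (m : K) / (ζ - 1) := by
    rw [eq_div_iff hz1]
    linear_combination hkey
  rw [hSval, hmcast]
  have hppow : (p : K) ^ (n + 1) ≠ 0 := pow_ne_zero _ hpK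
  field_simp
  ring
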